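/- arXiv:1009.2230 — 6 statements merged into one kernel-verified Lean document; each statement's English description precedes it below -/
import Mathlib

section
/- Let N ≥ 1 be a real number, λ > 0, y₀ ∈ (0,1], and set β = λN. If m : [0,∞) → ℝ is differentiable with m(0) = N·y₀, 0 ≤ m(t) ≤ N for all t ≥ 0, and m'(t) ≤ λ·m(t)·(N − m(t)) for all t ≥ 0, then m(t) ≤ N·y₀ / (y₀ + (1−y₀)·exp(−βt)) for all t ≥ 0. -/
open Set Real

/-- Comparison bound: if `m(0) = N y₀`, `0 ≤ m ≤ N` and `m' ≤ λ m (N − m)` on `[0, ∞)`,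
then `m(t) ≤ N y₀ / (y₀ + (1 − y₀) exp(−βt))` where `β = λ N`. -/
theorem stmt_1 (N lam y₀ β : ℝ) (hN : 1 ≤ N) (hlam : 0 < lam)
    (hy₀ : y₀ ∈ Set.Ioc (0:ℝ) 1) (hβ : β = lam * N)
    (m m' : ℝ → ℝ)
    (hm : ∀ t, 0 ≤ t → HasDerivWithinAt m (m' t) (Set.Ici 0) t)
    (hm0 : m 0 = N * y₀)
    (hlb : ∀ t, 0 ≤ t → 0 ≤ m t) (hub : ∀ t, 0 ≤ t → m t ≤ N)
    (hineq : ∀ t, 0 ≤ t → m' t ≤ lam * m t * (N - m t)) :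
    ∀ t, 0 ≤ t → m t ≤ N * y₀ / (y₀ + (1 - y₀) * Real.exp (-β * t)) := by
  obtain ⟨hy0, hy1⟩ := hy₀
  have hN0 : (0:ℝ) < N := lt_of_lt_of_le one_pos hN
  set p : ℝ → ℝ := fun t => y₀ + (1 - y₀) * Real.exp (-β * t) with hp_def
  have hp_pos : ∀ t, 0 < p t := by
    intro t
    have : 0 ≤ (1 - y₀) * Real.exp (-β * t) :=
      mul_nonneg (by linarith) (Real.exp_pos _).le
    simp only [hp_def]; linarith
  set g : ℝ → ℝ := fun t => N * y₀ / p t with hg_def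
  have hg_deriv : ∀ t, HasDerivAt g (lam * g t * (N - g t)) t := by
    intro t
    have he : HasDerivAt (fun t : ℝ => Real.exp (-β * t)) (Real.exp (-β * t) * (-β)) t := by
      have h1 : HasDerivAt (fun t : ℝ => -β * t) (-β) t := by
        simpa using (hasDerivAt_id t).const_mul (-β)
      exact (Real.hasDerivAt_exp (-β * t)).comp t h1
    have hp' : HasDerivAt p ((1 - y₀) * (Real.exp (-β * t) * (-β))) t := by
      simpa [hp_def] using (he.const_mul (1 - y₀)).const_add y₀
    have hg' : HasDerivAt g ((0 * p t - N * y₀ * ((1 - y₀) * (Real.exp (-β * t) * (-β)))) / (p t)^2) t :=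
      (hasDerivAt_const t (N * y₀)).div hp' (hp_pos t).ne'
    convert hg' using 1
    have hpt : p t ≠ 0 := (hp_pos t).ne'
    simp only [hg_def, hp_def] at hpt ⊢
    set E := Real.exp (-β * t) with hE
    clear_value E
    subst hβ
    field_simp
    ring
  have hg_pos : ∀ t, 0 < g t := fun t => div_pos (mul_pos hN0 hy0) (hp_pos t)
  -- main comparison: m t ≤ g t for t ≥ 0
  intro t ht
  show m t ≤ g t
  have key : ∀ ε > (0:ℝ), m t - g t ≤ ε * Real.exp (lam * N * t) := by
    intro ε hε
    set B : ℝ → ℝ := fun s => ε * Real.exp (lam * N * s) with hB_def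
    have hB' : ∀ s, HasDerivAt B (lam * N * (ε * Real.exp (lam * N * s))) s := by
      intro s
      have h1 : HasDerivAt (fun s : ℝ => lam * N * s) (lam * N) s := by
        simpa using (hasDerivAt_id s).const_mul (lam * N)
      have := ((Real.hasDerivAt_exp (lam * N * s)).comp s h1).const_mul ε
      simpa [hB_def, mul_comm, mul_assoc, mul_left_comm] using this
    have hf_cont : ContinuousOn (fun s => m s - g s) (Icc 0 t) := by
      apply ContinuousOn.sub
      · intro x hx
        exact ((hm x hx.1).continuousWithinAt).mono (fun y hy => hy.1)
      · exact fun x _ => ((hg_deriv x).continuousAt).continuousWithinAt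
    have hf' : ∀ x ∈ Ico (0:ℝ) t,
        HasDerivWithinAt (fun s => m s - g s) (m' x - lam * g x * (N - g x)) (Ici x) x := by
      intro x hx
      exact ((hm x hx.1).mono (Ici_subset_Ici.2 hx.1)).sub ((hg_deriv x).hasDerivWithinAt)
    have bound : ∀ x ∈ Ico (0:ℝ) t, m x - g x = B x →
        m' x - lam * g x * (N - g x) < lam * N * (ε * Real.exp (lam * N * x)) := by
      intro x hx hfB
      have hBx : 0 < B x := mul_pos hε (Real.exp_pos _)
      have hfx : 0 < m x - g x := hfB ▸ hBx
      have h1 : m' x ≤ lam * m x * (N - m x) := hineq x hx.1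
      have h2 : m' x - lam * g x * (N - g x) ≤ lam * (m x - g x) * (N - m x - g x) := by nlinarith
      have h3 : lam * (m x - g x) * (N - m x - g x) < lam * (m x - g x) * N := by
        apply mul_lt_mul_of_pos_left _ (mul_pos hlam hfx)
        have := hg_pos x
        have := hlb x hx.1
        linarith
      calc m' x - lam * g x * (N - g x) ≤ lam * (m x - g x) * (N - m x - g x) := h2
        _ < lam * (m x - g x) * N := h3
        _ = lam * N * (m x - g x) := by ring
        _ = lam * N * (ε * Real.exp (lam * N * x)) := by rw [hfB]
    have ha : m 0 - g 0 ≤ B 0 := by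
      have : g 0 = N * y₀ := by
        simp [hg_def, hp_def]
      rw [hm0, this, hB_def]
      simp
      positivity
    have := image_le_of_deriv_right_lt_deriv_boundary hf_cont hf' ha hB' bound
      (Set.right_mem_Icc.2 ht)
    simpa [hB_def] using this
  by_contra hcon
  push_neg at hcon
  have hd : 0 < m t - g t := by linarith
  have hε : 0 < (m t - g t) / (2 * Real.exp (lam * N * t)) := by positivity
  have h2 := key _ hε
  have hexp : Real.exp (lam * N * t) ≠ 0 := (Real.exp_pos _).ne'
  have heq : (m t - g t) / (2 * Real.exp (lam * N * t)) * Real.exp (lam * N * t)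
      = (m t - g t) / 2 := by field_simp
  rw [heq] at h2
  linarith
end

section
/- Let β > 0, μ > 0, θ = β/μ, and let y, x_c : [0,∞) → ℝ be differentiable with y(0) = y₀ ∈ (0,1), x_c(0) = x_{c,0} ∈ (0,1), satisfying y' = y(β·x_c − μ) and x_c' = −β·y·x_c on [0,∞), with y(t) > 0 and x_c(t) > 0 for all t. Then as t → ∞, y(t) → 0 and x_c(t) converges to the unique solution x_c(∞) in (0, x_{c,0}) of the equation x − θ^{−1}·log x = x_{c,0} + y₀ − θ^{−1}·log(x_{c,0}). -/
open Filter

lemma uniq_aux (k xc₀ y₀ a b : ℝ) (hk : 0 < k) (hy₀ : 0 < y₀)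
    (ha0 : 0 < a) (hab : a < b) (hbx : b < xc₀)
    (hga : a - k * Real.log a = xc₀ + y₀ - k * Real.log xc₀)
    (hgb : b - k * Real.log b = xc₀ + y₀ - k * Real.log xc₀) : False := by
  have hb0 : 0 < b := ha0.trans hab
  have hx0 : 0 < xc₀ := hb0.trans hbx
  have hlog1 : Real.log a < Real.log b := Real.log_lt_log ha0 hab
  have hlog2 : Real.log b < Real.log xc₀ := Real.log_lt_log hb0 hbx
  -- log a - log b < a/b - 1, multiplied by b :
  have h1 : Real.log a - Real.log b < a / b - 1 := by
    have hne : a / b ≠ 1 := ne_of_lt (by rwa [div_lt_one hb0])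
    have := Real.log_lt_sub_one_of_pos (div_pos ha0 hb0) hne
    rwa [Real.log_div ha0.ne' hb0.ne'] at this
  have h1' : b * (Real.log a - Real.log b) < a - b := by
    have e : a / b - 1 = (a - b) / b := by field_simp
    rw [e] at h1
    rw [mul_comm]
    exact (lt_div_iff₀ hb0).mp h1
  -- b - a = k * (log b - log a)
  have h2 : b - a = k * (Real.log b - Real.log a) := by linarith
  have hkb : k < b := by nlinarith
  -- log xc₀ - log b < xc₀/b - 1, multiplied by b :
  have h3 : Real.log xc₀ - Real.log b < xc₀ / b - 1 := by
    have hne : xc₀ / b ≠ 1 := ne_of_gt (by rwa [lt_div_iff₀ hb0, one_mul])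
    have := Real.log_lt_sub_one_of_pos (div_pos hx0 hb0) hne
    rwa [Real.log_div hx0.ne' hb0.ne'] at this
  have h3' : b * (Real.log xc₀ - Real.log b) < xc₀ - b := by
    have e : xc₀ / b - 1 = (xc₀ - b) / b := by field_simp
    rw [e] at h3
    rw [mul_comm]
    exact (lt_div_iff₀ hb0).mp h3
  have h5 : k * (Real.log xc₀ - Real.log b) < xc₀ - b := by nlinarith
  linarith

/-- Long-time behavior of the mean-field P2P ODEs: `y(t) → 0` and `x_c(t)` converges to
the unique solution in `(0, x_{c,0})` of `x − θ⁻¹ log x = x_{c,0} + y₀ − θ⁻¹ log x_{c,0}`. -/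
theorem stmt_11 (β μ θ y₀ xc₀ : ℝ) (hβ : 0 < β) (hμ : 0 < μ) (hθ : θ = β / μ)
    (hy₀ : y₀ ∈ Set.Ioo (0:ℝ) 1) (hxc₀ : xc₀ ∈ Set.Ioo (0:ℝ) 1)
    (y xc : ℝ → ℝ) (hy0 : y 0 = y₀) (hxc0 : xc 0 = xc₀)
    (hypos : ∀ t, 0 ≤ t → 0 < y t) (hxpos : ∀ t, 0 ≤ t → 0 < xc t)
    (hyd : ∀ t, 0 ≤ t → HasDerivWithinAt y (y t * (β * xc t - μ)) (Set.Ici 0) t)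
    (hxd : ∀ t, 0 ≤ t → HasDerivWithinAt xc (-(β * y t * xc t)) (Set.Ici 0) t) :
    Tendsto y atTop (nhds 0) ∧
    ∃ L, L ∈ Set.Ioo 0 xc₀ ∧
      L - θ⁻¹ * Real.log L = xc₀ + y₀ - θ⁻¹ * Real.log xc₀ ∧
      (∀ L', L' ∈ Set.Ioo 0 xc₀ →
        L' - θ⁻¹ * Real.log L' = xc₀ + y₀ - θ⁻¹ * Real.log xc₀ → L' = L) ∧
      Tendsto xc atTop (nhds L) := by
  obtain ⟨hy₀0, hy₀1⟩ := hy₀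
  obtain ⟨hx₀0, hx₀1⟩ := hxc₀
  have hk : (0:ℝ) < μ / β := div_pos hμ hβ
  set k : ℝ := μ / β with hk_def
  have hθinv : θ⁻¹ = k := by rw [hθ]; rw [inv_div]
  set C : ℝ := y₀ + xc₀ - k * Real.log xc₀ with hC
  set E : ℝ → ℝ := fun t => y t + xc t - k * Real.log (xc t) with hE
  -- E is conserved
  have hEd : ∀ t, 0 ≤ t → HasDerivWithinAt E 0 (Set.Ici 0) t := by
    intro t ht
    have hx := hxpos t ht
    have h3 : HasDerivWithinAt (fun s => Real.log (xc s)) (-(β * y t * xc t) / xc t)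
        (Set.Ici 0) t := (hxd t ht).log hx.ne'
    have h4 := ((hyd t ht).add (hxd t ht)).sub (h3.const_mul k)
    convert h4 using 1
    case e'_4 => rfl
    case e'_5 => rfl
    case e'_8 => rfl
    rw [hk_def]
    field_simp
    ring
  have hEconst : ∀ t, 0 ≤ t → E t = C := by
    intro t ht
    have hcont : ContinuousOn E (Set.Icc 0 t) := fun s hs =>
      ((hEd s hs.1).continuousWithinAt).mono Set.Icc_subset_Ici_self
    have := constant_of_has_deriv_right_zero hcont
      (fun x hx => (hEd x hx.1).mono (Set.Ici_subset_Ici.2 hx.1)) t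
      (Set.mem_Icc.2 ⟨ht, le_refl t⟩)
    rw [this, hE]
    simp only [hy0, hxc0, hC]
  -- xc is strictly decreasing on [0, ∞)
  have hxc_anti : StrictAntiOn xc (Set.Ici 0) := by
    apply strictAntiOn_of_hasDerivWithinAt_neg (convex_Ici 0)
      (fun s hs => (hxd s hs).continuousWithinAt)
      (f' := fun s => -(β * y s * xc s))
    · intro x hx
      rw [interior_Ici] at hx ⊢
      exact (hxd x hx.le).mono (Set.Ioi_subset_Ici_self)
    · intro x hx
      rw [interior_Ici] at hx
      have hy' := hypos x hx.le
      have hx' := hxpos x hx.le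
      have := mul_pos (mul_pos hβ hy') hx'
      linarith
  -- lower bound on xc
  have hlb : ∀ t, 0 ≤ t → Real.exp (-C / k) ≤ xc t := by
    intro t ht
    have hEt := hEconst t ht
    have hxt := hxpos t ht
    have hyt := hypos t ht
    have hlog : -C / k ≤ Real.log (xc t) := by
      rw [div_le_iff₀ hk]
      simp only [hE] at hEt
      nlinarith
    calc Real.exp (-C / k) ≤ Real.exp (Real.log (xc t)) := Real.exp_le_exp.2 hlog
      _ = xc t := Real.exp_log hxt
  -- the limit L
  set L : ℝ := ⨅ t : ℝ, xc (max t 0) with hLdef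
  have hganti : Antitone (fun t : ℝ => xc (max t 0)) := fun s t hst =>
    hxc_anti.antitoneOn (le_max_right s 0) (le_max_right t 0)
      (max_le_max hst (le_refl 0))
  have hbdd : BddBelow (Set.range fun t : ℝ => xc (max t 0)) :=
    ⟨Real.exp (-C / k), by rintro _ ⟨t, rfl⟩; exact hlb _ (le_max_right t 0)⟩
  have hxcL : Tendsto xc atTop (nhds L) := by
    have h1 : Tendsto (fun t : ℝ => xc (max t 0)) atTop (nhds L) :=
      tendsto_atTop_ciInf hganti hbdd
    apply h1.congr'
    filter_upwards [eventually_ge_atTop (0:ℝ)] with t ht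
    rw [max_eq_left ht]
  have hL0 : 0 < L := lt_of_lt_of_le (Real.exp_pos _)
    (le_ciInf fun t => hlb _ (le_max_right t 0))
  have hLlt : L < xc₀ := by
    have h1 : L ≤ xc 1 := by
      have := ciInf_le hbdd (1:ℝ)
      rwa [max_eq_left (by norm_num : (0:ℝ) ≤ 1)] at this
    have h2 : xc 1 < xc 0 := hxc_anti (Set.self_mem_Ici) (by norm_num) (by norm_num)
    rw [hxc0] at h2
    linarith
  -- limits of log xc and y
  have hlog_tend : Tendsto (fun t => Real.log (xc t)) atTop (nhds (Real.log L)) :=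
    ((Real.continuousAt_log hL0.ne').tendsto).comp hxcL
  set yL : ℝ := C - L + k * Real.log L with hyLdef
  have hy_tend : Tendsto y atTop (nhds yL) := by
    have h2 : Tendsto (fun t => C - xc t + k * Real.log (xc t)) atTop (nhds yL) := by
      rw [hyLdef]
      exact (tendsto_const_nhds.sub hxcL).add (hlog_tend.const_mul k)
    apply h2.congr'
    filter_upwards [eventually_ge_atTop (0:ℝ)] with t ht
    have := hEconst t ht
    simp only [hE] at this
    linarith
  have hyL_nonneg : 0 ≤ yL :=
    ge_of_tendsto hy_tend (by
      filter_upwards [eventually_ge_atTop (0:ℝ)] with t ht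
      exact (hypos t ht).le)
  -- yL = 0
  have hyL0 : yL = 0 := by
    by_contra hne
    have hyLpos : 0 < yL := lt_of_le_of_ne hyL_nonneg (Ne.symm hne)
    set c : ℝ := β * yL / 2 with hc_def
    have hc : 0 < c := by positivity
    have hev : ∀ᶠ t in atTop, yL / 2 < y t ∧ (0:ℝ) ≤ t :=
      (hy_tend.eventually (eventually_gt_nhds (by linarith))).and (eventually_ge_atTop 0)
    obtain ⟨T, hT⟩ := eventually_atTop.mp hev
    have hT0 : (0:ℝ) ≤ T := (hT T le_rfl).2
    -- h := log xc + c t is antitone on [T, ∞)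
    set h : ℝ → ℝ := fun t => Real.log (xc t) + c * t with hh_def
    have hanti : StrictAntiOn h (Set.Ici T) := by
      apply strictAntiOn_of_hasDerivWithinAt_neg (convex_Ici T)
        (f' := fun s => -(β * y s * xc s) / xc s + c * 1)
      · intro s hs
        have hs0 : (0:ℝ) ≤ s := le_trans hT0 hs
        exact (((hxd s hs0).log (hxpos s hs0).ne').mono
          (Set.Ici_subset_Ici.2 hT0)).continuousWithinAt.add
          ((continuous_const.mul continuous_id).continuousOn s hs)
      · intro s hs
        rw [interior_Ici] at hs ⊢
        have hs0 : (0:ℝ) ≤ s := le_trans hT0 hs.le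
        exact ((((hxd s hs0).log (hxpos s hs0).ne').mono
          (fun z hz => le_trans hT0 (le_of_lt hz))).add
          ((hasDerivWithinAt_id s _).const_mul c))
      · intro s hs
        rw [interior_Ici] at hs
        have hs0 : (0:ℝ) ≤ s := le_trans hT0 hs.le
        have hxs := hxpos s hs0
        have hys := (hT s hs.le).1
        have hdiv : -(β * y s * xc s) / xc s = -(β * y s) := by
          field_simp
        rw [hdiv, mul_one, hc_def]
        nlinarith
    have hev2 : ∀ᶠ t in atTop, Real.log (xc t) ≤ h T - c * t := by
      filter_upwards [eventually_ge_atTop T] with t ht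
      have := hanti.antitoneOn Set.self_mem_Ici ht ht
      simp only [hh_def] at this ⊢
      linarith
    have hbot : Tendsto (fun t : ℝ => h T - c * t) atTop atBot := by
      have h1 : Tendsto (fun t : ℝ => c * t) atTop atTop :=
        Tendsto.const_mul_atTop hc tendsto_id
      have h2 : Tendsto (fun t : ℝ => -(c * t)) atTop atBot :=
        tendsto_neg_atTop_atBot.comp h1
      simpa [sub_eq_add_neg] using tendsto_atBot_add_const_left atTop (h T) h2
    have : Tendsto (fun t => Real.log (xc t)) atTop atBot :=
      tendsto_atBot_mono' atTop hev2 hbot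
    exact not_tendsto_nhds_of_tendsto_atBot this _ hlog_tend
  -- conclude
  have hy_zero : Tendsto y atTop (nhds 0) := hyL0 ▸ hy_tend
  refine ⟨hy_zero, L, ⟨hL0, hLlt⟩, ?_, ?_, hxcL⟩
  · rw [hθinv]
    have : C - L + k * Real.log L = 0 := hyL0
    rw [hC] at this
    linarith
  · intro L' hL' heq'
    rw [hθinv] at heq'
    have heqL : L - k * Real.log L = xc₀ + y₀ - k * Real.log xc₀ := by
      have : C - L + k * Real.log L = 0 := hyL0
      rw [hC] at this
      linarith
    rcases lt_trichotomy L' L with hlt | heq | hgt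
    · exact absurd (uniq_aux k xc₀ y₀ L' L hk hy₀0 hL'.1 hlt hLlt heq' heqL) not_false
    · exact heq
    · exact absurd (uniq_aux k xc₀ y₀ L L' hk hy₀0 hL0 hgt hL'.2 heqL heq') not_false
end

section
/- Let λ > 0, μ > 0, set ξ = λ/μ, and let x₀ ∈ (0,1). Define x̃(t) = x₀·(1 − μt)^ξ and ỹ(t) = (1 − μt) − x₀·(1 − μt)^ξ for t ∈ [0, 1/μ). Then ỹ(0) = 1 − x₀, x̃(0) = x₀, x̃(t) + ỹ(t) = 1 − μt > 0 on [0, 1/μ), and the pair (ỹ, x̃) satisfies ỹ'(t) = −μ + λ·x̃(t)/(x̃(t) + ỹ(t)) and x̃'(t) = −λ·x̃(t)/(x̃(t) + ỹ(t)) for all t ∈ [0, 1/μ). -/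
/-- The pair `x̃(t) = x₀(1 − μt)^ξ`, `ỹ(t) = (1 − μt) − x₀(1 − μt)^ξ` (with `ξ = λ/μ`)
solves the time-rescaled mean-field ODEs on `[0, 1/μ)` with `ỹ(0) = 1 − x₀`, `x̃(0) = x₀`. -/
theorem stmt_14 (lam μ ξ x₀ : ℝ) (hlam : 0 < lam) (hμ : 0 < μ) (hξ : ξ = lam / μ)
    (hx₀ : x₀ ∈ Set.Ioo (0:ℝ) 1)
    (x y : ℝ → ℝ)
    (hx : ∀ t, x t = x₀ * (1 - μ * t) ^ ξ)
    (hy : ∀ t, y t = (1 - μ * t) - x₀ * (1 - μ * t) ^ ξ) :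
    y 0 = 1 - x₀ ∧ x 0 = x₀ ∧
    (∀ t ∈ Set.Ico (0:ℝ) (1 / μ), x t + y t = 1 - μ * t ∧ 0 < x t + y t) ∧
    (∀ t ∈ Set.Ico (0:ℝ) (1 / μ),
      HasDerivAt y (-μ + lam * x t / (x t + y t)) t ∧
      HasDerivAt x (-(lam * x t / (x t + y t))) t) := by
  obtain ⟨hx0, hx1⟩ := hx₀
  have hxf : x = fun s => x₀ * (1 - μ * s) ^ ξ := funext hx
  have hyf : y = fun s => (1 - μ * s) - x₀ * (1 - μ * s) ^ ξ := funext hy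
  have hsum : ∀ t, x t + y t = 1 - μ * t := by
    intro t; rw [hx, hy]; ring
  have hpos : ∀ t ∈ Set.Ico (0:ℝ) (1 / μ), (0:ℝ) < 1 - μ * t := by
    intro t ht
    have h2 : t * μ < 1 := (lt_div_iff₀ hμ).mp ht.2
    nlinarith
  have hg : ∀ t : ℝ, HasDerivAt (fun s : ℝ => 1 - μ * s) (-μ) t := by
    intro t
    simpa using ((hasDerivAt_id t).const_mul μ).const_sub 1
  have hxderiv : ∀ t ∈ Set.Ico (0:ℝ) (1 / μ),
      HasDerivAt x (-(lam * x t / (x t + y t))) t := by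
    intro t ht
    have hb := hpos t ht
    have h1 : HasDerivAt (fun s : ℝ => (1 - μ * s) ^ ξ)
        (-μ * ξ * (1 - μ * t) ^ (ξ - 1)) t :=
      (hg t).rpow_const (Or.inl hb.ne')
    have h2 := h1.const_mul x₀
    have h2' : HasDerivAt x (x₀ * (-μ * ξ * (1 - μ * t) ^ (ξ - 1))) t := hxf ▸ h2
    have heq : x₀ * (-μ * ξ * (1 - μ * t) ^ (ξ - 1)) = -(lam * x t / (x t + y t)) := by
      rw [hsum t, hx, Real.rpow_sub_one hb.ne', hξ]
      field_simp
    exact heq ▸ h2'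
  refine ⟨by rw [hy]; simp, by rw [hx]; simp, fun t ht => ⟨hsum t, (hsum t) ▸ hpos t ht⟩,
    fun t ht => ⟨?_, hxderiv t ht⟩⟩
  have hyd := (hg t).sub (hxderiv t ht)
  have hyeq : y = fun s => (1 - μ * s) - x s := by
    funext s; rw [hy, hx]
  rw [show ((fun s : ℝ => 1 - μ * s) - x) = y by rw [hyeq]; rfl] at hyd
  rwa [show -μ + lam * x t / (x t + y t) = -μ - -(lam * x t / (x t + y t)) by ring]
end

section
/- Let μ > 0, x₀ ∈ (0,1), ξ > 0, and define ỹ(t) = (1 − μt)·(1 − x₀·(1 − μt)^{ξ−1}) for t ∈ [0, 1/μ]. If ξ < 1, then the smallest zero of ỹ in [0, 1/μ] is τ = (1 − x₀^{1/(1−ξ)})/μ, and at that time x̃(τ) := x₀·(1 − μτ)^ξ = x₀^{1/(1−ξ)}. If ξ ≥ 1, then ỹ(t) > 0 for all t ∈ [0, 1/μ), the smallest (and only) zero of ỹ in [0, 1/μ] is τ = 1/μ, and x̃(τ) := x₀·(1 − μτ)^ξ = 0. -/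
/-- Phase transition at `ξ = 1` for the fraction of peers that never get the file:
for `ỹ(t) = (1 − μt)(1 − x₀(1 − μt)^{ξ−1})`, if `ξ < 1` the smallest zero of `ỹ` in
`[0, 1/μ]` is `τ = (1 − x₀^{1/(1−ξ)})/μ` with `x̃(τ) = x₀^{1/(1−ξ)}`; if `ξ ≥ 1` then
`ỹ > 0` on `[0, 1/μ)`, the only zero is `τ = 1/μ`, and `x̃(τ) = 0`. -/
theorem stmt_15 (μ x₀ ξ : ℝ) (hμ : 0 < μ) (hx₀ : x₀ ∈ Set.Ioo (0:ℝ) 1) (hξ : 0 < ξ)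
    (y : ℝ → ℝ)
    (hy : ∀ t, y t = (1 - μ * t) * (1 - x₀ * (1 - μ * t) ^ (ξ - 1))) :
    (ξ < 1 →
      IsLeast {t | t ∈ Set.Icc (0:ℝ) (1 / μ) ∧ y t = 0} ((1 - x₀ ^ (1 / (1 - ξ))) / μ) ∧
      x₀ * (1 - μ * ((1 - x₀ ^ (1 / (1 - ξ))) / μ)) ^ ξ = x₀ ^ (1 / (1 - ξ))) ∧
    (1 ≤ ξ →
      (∀ t ∈ Set.Ico (0:ℝ) (1 / μ), 0 < y t) ∧
      {t | t ∈ Set.Icc (0:ℝ) (1 / μ) ∧ y t = 0} = {1 / μ} ∧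
      x₀ * (1 - μ * (1 / μ)) ^ ξ = 0) := by
  obtain ⟨hx0, hx1⟩ := hx₀
  constructor
  · intro hξ1
    have h1ξ : (0:ℝ) < 1 - ξ := by linarith
    set a : ℝ := x₀ ^ (1 / (1 - ξ)) with ha
    have ha0 : 0 < a := Real.rpow_pos_of_pos hx0 _
    have ha1 : a < 1 := Real.rpow_lt_one hx0.le hx1 (by positivity)
    have hμτ : 1 - μ * ((1 - a) / μ) = a := by field_simp; ring
    have hapow : ∀ z : ℝ, a ^ z = x₀ ^ (1 / (1 - ξ) * z) := fun z => by
      rw [ha, ← Real.rpow_mul hx0.le]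
    have hkey : x₀ * a ^ (ξ - 1) = 1 := by
      rw [hapow, ← Real.rpow_one x₀, ← Real.rpow_mul hx0.le, ← Real.rpow_add hx0]
      rw [show (1:ℝ) + 1 * (1 / (1 - ξ) * (ξ - 1)) = 0 by field_simp; ring]
      exact Real.rpow_zero x₀
    have hyτ : y ((1 - a) / μ) = 0 := by
      rw [hy, hμτ, hkey]; ring
    refine ⟨⟨⟨⟨div_nonneg (by linarith) hμ.le,
        div_le_div_of_nonneg_right (by linarith) hμ.le⟩, hyτ⟩, ?_⟩, ?_⟩
    · rintro t ⟨⟨ht0, ht1⟩, hyt⟩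
      by_contra hlt
      push_neg at hlt
      have hs : a < 1 - μ * t := by
        have : μ * t < μ * ((1 - a) / μ) := by
          exact mul_lt_mul_of_pos_left hlt hμ
        rw [mul_div_cancel₀ _ hμ.ne'] at this
        linarith
      have hs0 : 0 < 1 - μ * t := lt_trans ha0 hs
      have hlt2 : (1 - μ * t) ^ (ξ - 1) < a ^ (ξ - 1) :=
        Real.rpow_lt_rpow_of_neg ha0 hs (by linarith)
      have : x₀ * (1 - μ * t) ^ (ξ - 1) < 1 := by
        calc x₀ * (1 - μ * t) ^ (ξ - 1) < x₀ * a ^ (ξ - 1) :=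
              mul_lt_mul_of_pos_left hlt2 hx0
          _ = 1 := hkey
      have : 0 < y t := by
        rw [hy]; exact mul_pos hs0 (by linarith)
      rw [hyt] at this; exact lt_irrefl 0 this
    · rw [hμτ, hapow, ← Real.rpow_one x₀, ← Real.rpow_mul hx0.le, ← Real.rpow_add hx0,
        show (1:ℝ) + 1 * (1 / (1 - ξ) * ξ) = 1 / (1 - ξ) by field_simp; ring]
  · intro hξ1
    have hpos : ∀ t ∈ Set.Ico (0:ℝ) (1 / μ), 0 < y t := by
      rintro t ⟨ht0, ht1⟩
      have hs0 : 0 < 1 - μ * t := by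
        have : μ * t < μ * (1 / μ) := mul_lt_mul_of_pos_left ht1 hμ
        rw [mul_one_div, div_self hμ.ne'] at this
        linarith
      have hs1 : 1 - μ * t ≤ 1 := by nlinarith
      have : (1 - μ * t) ^ (ξ - 1) ≤ 1 := Real.rpow_le_one hs0.le hs1 (by linarith)
      have : x₀ * (1 - μ * t) ^ (ξ - 1) < 1 := by
        calc x₀ * (1 - μ * t) ^ (ξ - 1) ≤ x₀ * 1 := by
              exact mul_le_mul_of_nonneg_left this hx0.le
          _ < 1 := by linarith
      rw [hy]; exact mul_pos hs0 (by linarith)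
    refine ⟨hpos, ?_, ?_⟩
    · ext t
      simp only [Set.mem_setOf_eq, Set.mem_singleton_iff]
      constructor
      · rintro ⟨⟨ht0, ht1⟩, hyt⟩
        rcases lt_or_eq_of_le ht1 with h | h
        · exact absurd hyt (ne_of_gt (hpos t ⟨ht0, h⟩))
        · exact h
      · rintro rfl
        refine ⟨⟨by positivity, le_refl _⟩, ?_⟩
        rw [hy, show 1 - μ * (1 / μ) = 0 by field_simp; ring]
        ring
    · rw [show 1 - μ * (1 / μ) = 0 by field_simp; ring, Real.zero_rpow hξ.ne', mul_zero]
end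

section
/- Let μ > 0, x₀ ∈ (0,1), and ξ > 1/x₀. Define ỹ(t) = (1 − μt) − x₀·(1 − μt)^ξ for t ∈ [0, 1/μ]. Then ỹ attains its maximum over [0, 1/μ] at the unique point t₁ = (1 − (ξ·x₀)^{1/(1−ξ)})/μ ∈ (0, 1/μ), and the maximum value is ỹ(t₁) = x₀^{1/(1−ξ)}·ξ^{ξ/(1−ξ)}·(ξ − 1) > 0. Moreover ỹ is increasing on [0, t₁] and decreasing on [t₁, 1/μ]. -/
/-- Maximum torrent size when `ξ > 1/x₀`: `ỹ(t) = (1 − μt) − x₀(1 − μt)^ξ` attains its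
maximum over `[0, 1/μ]` at the unique point `t₁ = (1 − (ξx₀)^{1/(1−ξ)})/μ ∈ (0, 1/μ)`,
with maximum value `x₀^{1/(1−ξ)} ξ^{ξ/(1−ξ)} (ξ − 1) > 0`; `ỹ` is increasing on `[0, t₁]`
and decreasing on `[t₁, 1/μ]`. -/
theorem stmt_16 (μ x₀ ξ : ℝ) (hμ : 0 < μ) (hx₀ : x₀ ∈ Set.Ioo (0:ℝ) 1)
    (hξ : 1 / x₀ < ξ)
    (y : ℝ → ℝ) (hy : ∀ t, y t = (1 - μ * t) - x₀ * (1 - μ * t) ^ ξ)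
    (t₁ : ℝ) (ht₁ : t₁ = (1 - (ξ * x₀) ^ (1 / (1 - ξ))) / μ) :
    t₁ ∈ Set.Ioo 0 (1 / μ) ∧
    (∀ t ∈ Set.Icc (0:ℝ) (1 / μ), t ≠ t₁ → y t < y t₁) ∧
    y t₁ = x₀ ^ (1 / (1 - ξ)) * ξ ^ (ξ / (1 - ξ)) * (ξ - 1) ∧
    0 < x₀ ^ (1 / (1 - ξ)) * ξ ^ (ξ / (1 - ξ)) * (ξ - 1) ∧
    StrictMonoOn y (Set.Icc 0 t₁) ∧
    StrictAntiOn y (Set.Icc t₁ (1 / μ)) := by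
  obtain ⟨hx0, hx1⟩ := hx₀
  have hyf : y = fun t => (1 - μ * t) - x₀ * (1 - μ * t) ^ ξ := funext hy
  subst hyf
  have hξ1 : 1 < ξ := lt_trans (one_lt_one_div hx0 hx1) hξ
  have hξ0 : 0 < ξ := by linarith
  have hξx : 1 < ξ * x₀ := by
    have := (div_lt_iff₀ hx0).mp hξ
    linarith
  have hξxpos : 0 < ξ * x₀ := by linarith
  set s₁ : ℝ := (ξ * x₀) ^ (1 / (1 - ξ)) with hs₁def
  have hexp_neg : 1 / (1 - ξ) < 0 := div_neg_of_pos_of_neg one_pos (by linarith)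
  have hs₁pos : 0 < s₁ := Real.rpow_pos_of_pos hξxpos _
  have hs₁lt1 : s₁ < 1 := Real.rpow_lt_one_of_one_lt_of_neg hξx hexp_neg
  have hμt₁ : 1 - μ * t₁ = s₁ := by
    rw [ht₁]; field_simp; ring
  have ht₁mem : t₁ ∈ Set.Ioo 0 (1 / μ) := by
    constructor
    · rw [ht₁]; exact div_pos (by linarith) hμ
    · rw [ht₁, div_lt_div_iff₀ hμ hμ]
      nlinarith
  -- key power identity
  have hkey : s₁ ^ (ξ - 1) = (ξ * x₀)⁻¹ := by
    have h1mξ : (1:ℝ) - ξ ≠ 0 := by linarith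
    rw [hs₁def, ← Real.rpow_mul hξxpos.le,
      show 1 / (1 - ξ) * (ξ - 1) = -1 by field_simp; ring, Real.rpow_neg_one]
  -- continuity
  have hcont : Continuous (fun t : ℝ => (1 - μ * t) - x₀ * (1 - μ * t) ^ ξ) := by
    have h1 : Continuous (fun t : ℝ => 1 - μ * t) := by continuity
    have h2 : Continuous (fun x : ℝ => x ^ ξ) :=
      continuous_iff_continuousAt.mpr fun x =>
        Real.continuousAt_rpow_const x ξ (Or.inr hξ0.le)
    exact h1.sub (continuous_const.mul (h2.comp h1))
  -- derivative
  have hderiv : ∀ t : ℝ, 1 - μ * t ≠ 0 →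
      HasDerivAt (fun t : ℝ => (1 - μ * t) - x₀ * (1 - μ * t) ^ ξ)
        (μ * (ξ * x₀ * (1 - μ * t) ^ (ξ - 1) - 1)) t := by
    intro t ht
    have hu : HasDerivAt (fun t : ℝ => 1 - μ * t) (-μ) t := by
      simpa using ((hasDerivAt_id t).const_mul μ).const_sub 1
    have hp : HasDerivAt (fun t : ℝ => (1 - μ * t) ^ ξ)
        (ξ * (1 - μ * t) ^ (ξ - 1) * (-μ)) t :=
      by have := (Real.hasDerivAt_rpow_const (x := 1 - μ * t) (p := ξ) (Or.inl ht)).comp t hu; exact this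
    have := hu.sub ((hp.const_mul x₀))
    exact this.congr_deriv (by ring)
  -- strict mono on [0, t₁]
  have hmono : StrictMonoOn (fun t : ℝ => (1 - μ * t) - x₀ * (1 - μ * t) ^ ξ)
      (Set.Icc 0 t₁) := by
    apply strictMonoOn_of_deriv_pos (convex_Icc _ _) hcont.continuousOn
    intro t ht
    rw [interior_Icc] at ht
    obtain ⟨ht0, htt⟩ := ht
    have hs : s₁ < 1 - μ * t := by
      rw [← hμt₁]
      have : μ * t < μ * t₁ := by nlinarith
      linarith
    have hsne : 1 - μ * t ≠ 0 := ne_of_gt (lt_trans hs₁pos hs)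
    rw [(hderiv t hsne).deriv]
    have hgt : s₁ ^ (ξ - 1) < (1 - μ * t) ^ (ξ - 1) :=
      Real.rpow_lt_rpow hs₁pos.le hs (by linarith)
    rw [hkey] at hgt
    have h1 := mul_lt_mul_of_pos_left hgt hξxpos
    have h2 := mul_inv_cancel₀ (ne_of_gt hξxpos)
    nlinarith
  -- strict anti on [t₁, 1/μ]
  have hanti : StrictAntiOn (fun t : ℝ => (1 - μ * t) - x₀ * (1 - μ * t) ^ ξ)
      (Set.Icc t₁ (1 / μ)) := by
    apply strictAntiOn_of_deriv_neg (convex_Icc _ _) hcont.continuousOn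
    intro t ht
    rw [interior_Icc] at ht
    obtain ⟨htt, htμ⟩ := ht
    have hspos : 0 < 1 - μ * t := by
      have : μ * t < μ * (1 / μ) := by nlinarith
      rw [mul_one_div, div_self (ne_of_gt hμ)] at this
      linarith
    have hs : 1 - μ * t < s₁ := by
      rw [← hμt₁]
      have : μ * t₁ < μ * t := by nlinarith
      linarith
    rw [(hderiv t (ne_of_gt hspos)).deriv]
    have hlt : (1 - μ * t) ^ (ξ - 1) < s₁ ^ (ξ - 1) :=
      Real.rpow_lt_rpow hspos.le hs (by linarith)
    rw [hkey] at hlt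
    have h1 := mul_lt_mul_of_pos_left hlt hξxpos
    have h2 := mul_inv_cancel₀ (ne_of_gt hξxpos)
    nlinarith
  -- value at t₁
  have hval : (1 - μ * t₁) - x₀ * (1 - μ * t₁) ^ ξ
      = x₀ ^ (1 / (1 - ξ)) * ξ ^ (ξ / (1 - ξ)) * (ξ - 1) := by
    have hsξ : s₁ ^ ξ = (ξ * x₀)⁻¹ * s₁ := by
      have : s₁ ^ ξ = s₁ ^ (ξ - 1) * s₁ ^ (1:ℝ) := by
        rw [← Real.rpow_add hs₁pos]; ring_nf
      rw [this, hkey, Real.rpow_one]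
    rw [hμt₁, hsξ]
    have hsplit : s₁ = ξ ^ (1 / (1 - ξ)) * x₀ ^ (1 / (1 - ξ)) :=
      Real.mul_rpow hξ0.le hx0.le
    have hξpow : ξ ^ (ξ / (1 - ξ)) = ξ ^ (1 / (1 - ξ)) / ξ := by
      have h1mξ : (1:ℝ) - ξ ≠ 0 := by linarith
      rw [show ξ / (1 - ξ) = 1 / (1 - ξ) - 1 by rw [div_sub_one h1mξ]; ring_nf,
        Real.rpow_sub hξ0, Real.rpow_one]
    rw [hsplit, hξpow]
    field_simp
  have hvalpos : 0 < x₀ ^ (1 / (1 - ξ)) * ξ ^ (ξ / (1 - ξ)) * (ξ - 1) := by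
    have h1 := Real.rpow_pos_of_pos hx0 (1 / (1 - ξ))
    have h2 := Real.rpow_pos_of_pos hξ0 (ξ / (1 - ξ))
    exact mul_pos (mul_pos h1 h2) (by linarith)
  refine ⟨ht₁mem, ?_, hval, hvalpos, hmono, hanti⟩
  intro t ht hne
  obtain ⟨ht0, htμ⟩ := ht
  rcases lt_or_gt_of_ne hne with h | h
  · exact hmono ⟨ht0, h.le⟩ ⟨ht₁mem.1.le, le_rfl⟩ h
  · exact hanti ⟨le_rfl, ht₁mem.2.le⟩ ⟨h.le, htμ⟩ h
end

section
/- Let μ > 0, x₀ ∈ (0,1), and 0 < ξ ≤ 1/x₀. Define ỹ(t) = (1 − μt) − x₀·(1 − μt)^ξ, and let τ = (1 − x₀^{1/(1−ξ)})/μ if ξ < 1 and τ = 1/μ if ξ ≥ 1. Then ỹ is nonincreasing on [0, τ], so its maximum over [0, τ] equals ỹ(0) = 1 − x₀. -/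
/-- When `0 < ξ ≤ 1/x₀`, the fraction `ỹ(t) = (1 − μt) − x₀(1 − μt)^ξ` is nonincreasing
on `[0, τ]` (where `τ` is the first zero of `ỹ`), so its maximum over `[0, τ]` is
`ỹ(0) = 1 − x₀`. -/
theorem stmt_17 (μ x₀ ξ : ℝ) (hμ : 0 < μ) (hx₀ : x₀ ∈ Set.Ioo (0:ℝ) 1)
    (hξ0 : 0 < ξ) (hξ : ξ ≤ 1 / x₀)
    (y : ℝ → ℝ) (hy : ∀ t, y t = (1 - μ * t) - x₀ * (1 - μ * t) ^ ξ)
    (τ : ℝ) (hτ : τ = if ξ < 1 then (1 - x₀ ^ (1 / (1 - ξ))) / μ else 1 / μ) :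
    AntitoneOn y (Set.Icc 0 τ) ∧
    y 0 = 1 - x₀ ∧
    IsGreatest (y '' Set.Icc 0 τ) (1 - x₀) := by
  obtain ⟨hx0, hx1⟩ := hx₀
  have hyf : y = fun t => (1 - μ * t) - x₀ * (1 - μ * t) ^ ξ := funext hy
  subst hyf
  set c : ℝ := if ξ < 1 then x₀ ^ (1 / (1 - ξ)) else 0 with hc
  have hc0 : 0 ≤ c := by
    rw [hc]; split_ifs
    · exact Real.rpow_nonneg hx0.le _
    · exact le_refl 0
  have hc1 : c ≤ 1 := by
    rw [hc]; split_ifs with h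
    · exact Real.rpow_le_one hx0.le hx1.le (le_of_lt (by apply div_pos one_pos; linarith))
    · norm_num
  have hμτ : μ * τ = 1 - c := by
    rw [hτ, hc]; split_ifs with h
    · field_simp
    · field_simp; norm_num
  have hτ0 : 0 ≤ τ := by nlinarith
  -- key pointwise derivative bound
  have key : ∀ u : ℝ, 0 < u → c ≤ u → u ≤ 1 → x₀ * (ξ * u ^ (ξ - 1)) ≤ 1 := by
    intro u hu0 huc hu1
    by_cases h : ξ < 1
    · have hcpos : (0:ℝ) < x₀ ^ (1 / (1 - ξ)) := Real.rpow_pos_of_pos hx0 _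
      have hcu : x₀ ^ (1 / (1 - ξ)) ≤ u := by rw [hc] at huc; simpa [h] using huc
      have h1 : u ^ (ξ - 1) ≤ (x₀ ^ (1 / (1 - ξ))) ^ (ξ - 1) :=
        Real.rpow_le_rpow_of_nonpos hcpos hcu (by linarith)
      have h2 : (x₀ ^ (1 / (1 - ξ))) ^ (ξ - 1) = x₀⁻¹ := by
        rw [← Real.rpow_mul hx0.le]
        have he : 1 / (1 - ξ) * (ξ - 1) = -1 := by
          have : (1:ℝ) - ξ ≠ 0 := by linarith
          field_simp; ring
        rw [he, Real.rpow_neg_one]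
      rw [h2] at h1
      have h3 : x₀ * (ξ * u ^ (ξ - 1)) ≤ x₀ * (ξ * x₀⁻¹) := by gcongr
      have h4 : x₀ * (ξ * x₀⁻¹) = ξ := by field_simp
      linarith [h3, h4.le]
    · push_neg at h
      have h1 : u ^ (ξ - 1) ≤ 1 := Real.rpow_le_one hu0.le hu1 (by linarith)
      have h2 : x₀ * ξ ≤ 1 := by
        rw [le_div_iff₀ hx0] at hξ; linarith [hξ]
      have h3 : 0 ≤ u ^ (ξ - 1) := Real.rpow_nonneg hu0.le _
      nlinarith
  have hder : ∀ x ∈ interior (Set.Icc 0 τ),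
      HasDerivAt (fun t => (1 - μ * t) - x₀ * (1 - μ * t) ^ ξ)
        (-μ - x₀ * (ξ * (1 - μ * x) ^ (ξ - 1) * -μ)) x := by
    intro x hx
    rw [interior_Icc] at hx
    have hu : 0 < 1 - μ * x := by nlinarith [hx.2]
    have h1 : HasDerivAt (fun t : ℝ => 1 - μ * t) (-μ) x := by
      simpa using ((hasDerivAt_id x).const_mul μ).const_sub 1
    have h2 := (Real.hasDerivAt_rpow_const (p := ξ) (Or.inl hu.ne')).comp x h1
    exact h1.sub (h2.const_mul x₀)
  have hanti : AntitoneOn (fun t => (1 - μ * t) - x₀ * (1 - μ * t) ^ ξ) (Set.Icc 0 τ) := by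
    apply antitoneOn_of_deriv_nonpos (convex_Icc 0 τ)
    · apply ContinuousOn.sub
      · fun_prop
      · apply Continuous.continuousOn
        apply Continuous.mul continuous_const
        apply continuous_iff_continuousAt.2
        intro x
        exact (Real.continuousAt_rpow_const _ _ (Or.inr hξ0.le)).comp
          (by fun_prop : Continuous fun t : ℝ => 1 - μ * t).continuousAt
    · exact fun x hx => (hder x hx).differentiableAt.differentiableWithinAt
    · intro x hx
      rw [(hder x hx).deriv]
      rw [interior_Icc] at hx
      have hu0 : 0 < 1 - μ * x := by nlinarith [hx.2]
      have huc : c ≤ 1 - μ * x := by nlinarith [hx.2]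
      have hu1 : 1 - μ * x ≤ 1 := by nlinarith [hx.1]
      have := key (1 - μ * x) hu0 huc hu1
      nlinarith
  refine ⟨hanti, ?_, ?_⟩
  · simp
  · constructor
    · exact ⟨0, ⟨le_refl 0, hτ0⟩, by simp⟩
    · rintro v ⟨t, ht, rfl⟩
      have := hanti ⟨le_refl 0, hτ0⟩ ht ht.1
      simpa using this
end
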